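/- Let α ∈ ℝ and define the null-point magnetic field B : ℝ³ → ℝ³ by B(x) := (x₂, α·x₁, 0). Then: (a) curl B = (0, 0, α − 1) and div B = 0; (b) B × (curl B) = ∇q where q(x) := ((α − 1)/2)·(α·x₁² − x₂²); (c) for any d_e > 0 and d_i ≥ 0, the pair (v, B*) := (0, B) together with B and the pressure p := −q is a stationary solution of incompressible extended MHD, i.e. B* = B + d_e²·curl(curl B), (v·∇)v + ∇p + B* × (curl B) = 0, and curl(B* × (v − d_i·curl B)) + d_e²·curl((curl v) × (curl B)) = 0. -/

import Mathlib

noncomputable section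

open MeasureTheory Real

/-- Euclidean 3-space. -/
abbrev E3 : Type := EuclideanSpace ℝ (Fin 3)

/-- Build a vector in `E3` from three coordinates. -/
def mk3 (a b c : ℝ) : E3 := (WithLp.equiv 2 (Fin 3 → ℝ)).symm ![a, b, c]

/-- Partial derivative in the `i`-th coordinate direction. -/
def pd (i : Fin 3) (f : E3 → ℝ) (x : E3) : ℝ :=
  fderiv ℝ f x (EuclideanSpace.single i 1)

/-- Curl of a vector field on `ℝ³`. -/
def ecurl (f : E3 → E3) (x : E3) : E3 :=
  mk3 (pd 1 (fun y => f y 2) x - pd 2 (fun y => f y 1) x)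
      (pd 2 (fun y => f y 0) x - pd 0 (fun y => f y 2) x)
      (pd 0 (fun y => f y 1) x - pd 1 (fun y => f y 0) x)

/-- Divergence of a vector field on `ℝ³`. -/
def ediv (f : E3 → E3) (x : E3) : ℝ :=
  pd 0 (fun y => f y 0) x + pd 1 (fun y => f y 1) x + pd 2 (fun y => f y 2) x

/-- Gradient of a scalar field on `ℝ³`. -/
def egrad (h : E3 → ℝ) (x : E3) : E3 :=
  mk3 (pd 0 h x) (pd 1 h x) (pd 2 h x)

/-- Cross product on `ℝ³`. -/
def cross3 (u w : E3) : E3 :=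
  mk3 (u 1 * w 2 - u 2 * w 1) (u 2 * w 0 - u 0 * w 2) (u 0 * w 1 - u 1 * w 0)

/-- Advection `(g · ∇) f` of a vector field `f` along the vector `g`. -/
def advect (g : E3) (f : E3 → E3) (x : E3) : E3 :=
  mk3 (∑ j, g j * pd j (fun y => f y 0) x)
      (∑ j, g j * pd j (fun y => f y 1) x)
      (∑ j, g j * pd j (fun y => f y 2) x)

/-- Componentwise Laplacian of a vector field on `ℝ³`. -/
def elap (f : E3 → E3) (x : E3) : E3 :=
  mk3 (∑ i, pd i (fun y => pd i (fun z => f z 0) y) x)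
      (∑ i, pd i (fun y => pd i (fun z => f z 1) y) x)
      (∑ i, pd i (fun y => pd i (fun z => f z 2) y) x)

/-- Time derivative of a time-dependent vector field. -/
def tderiv (f : ℝ → E3 → E3) (t : ℝ) (x : E3) : E3 :=
  deriv (fun s => f s x) t

@[simp] lemma mk3_app0 (a b c : ℝ) : mk3 a b c 0 = a := rfl
@[simp] lemma mk3_app1 (a b c : ℝ) : mk3 a b c 1 = b := rfl
@[simp] lemma mk3_app2 (a b c : ℝ) : mk3 a b c 2 = c := rfl

@[simp] lemma pd_const (i : Fin 3) (c : ℝ) (x : E3) : pd i (fun _ => c) x = 0 := by simp [pd]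

@[simp] lemma pd_coord (i j : Fin 3) (x : E3) :
    pd i (fun y => y j) x = if j = i then 1 else 0 := by
  have h := (EuclideanSpace.proj (𝕜 := ℝ) j).hasFDerivAt (x := x)
  rw [pd, show (fun y : E3 => y j) = ⇑(EuclideanSpace.proj (𝕜 := ℝ) j) from rfl, h.fderiv]
  simp [EuclideanSpace.single_apply]

@[simp] lemma pd_lin (c : ℝ) (i j : Fin 3) (x : E3) :
    pd i (fun y => c * y j) x = if j = i then c else 0 := by
  have h := ((EuclideanSpace.proj (𝕜 := ℝ) j).hasFDerivAt (x := x)).const_mul c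
  rw [pd, show (fun y : E3 => c * y j) = fun y => c * (EuclideanSpace.proj (𝕜 := ℝ) j) y from rfl,
    h.fderiv]
  simp [EuclideanSpace.single_apply]

@[simp] lemma pd_neg_lin (c : ℝ) (i j : Fin 3) (x : E3) :
    pd i (fun y => -(c * y j)) x = if j = i then -c else 0 := by
  have h := pd_lin (-c) i j x
  simp only [neg_mul] at h
  rw [h]

lemma hasF_sq (j : Fin 3) (x : E3) :
    HasFDerivAt (fun y : E3 => (y j)^2)
      ((2 * x j) • (EuclideanSpace.proj (𝕜 := ℝ) j : E3 →L[ℝ] ℝ)) x := by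
  have h := ((EuclideanSpace.proj (𝕜 := ℝ) j).hasFDerivAt (x := x)).mul
    ((EuclideanSpace.proj (𝕜 := ℝ) j).hasFDerivAt (x := x))
  simp only [pow_two]
  have h' : HasFDerivAt (fun y : E3 => y j * y j) _ x := h
  refine h'.congr_fderiv ?_
  ext v
  simp
  ring

lemma pd_quad (C a : ℝ) (x : E3) (i : Fin 3) :
    pd i (fun y : E3 => C * (a * (y 0)^2 - (y 1)^2)) x
      = C * (a * (2 * x 0 * (if (0:Fin 3) = i then 1 else 0))
          - 2 * x 1 * (if (1:Fin 3) = i then 1 else 0)) := by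
  have h := (((hasF_sq 0 x).const_mul a).sub (hasF_sq 1 x)).const_mul C
  have h' : HasFDerivAt (fun y : E3 => C * (a * (y 0)^2 - (y 1)^2)) _ x := h
  rw [pd, h'.fderiv]
  simp [EuclideanSpace.single_apply]

/-- The null-point field `B(x) = (x₂, αx₁, 0)`:
`curl B = (0,0,α−1)`, `div B = 0`, `B × curl B = ∇q` with
`q = ((α−1)/2)(αx₁² − x₂²)`, and `(0, B)` with pressure `−q` is a stationary solution of
incompressible extended MHD for any `d_e > 0`, `d_i ≥ 0`. -/
theorem null_point_stationary_solution
    (α : ℝ)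
    (B : E3 → E3) (hB : ∀ x, B x = mk3 (x 1) (α * x 0) 0)
    (q : E3 → ℝ) (hq : ∀ x, q x = ((α - 1) / 2) * (α * (x 0)^2 - (x 1)^2)) :
    (∀ x, ecurl B x = mk3 0 0 (α - 1) ∧ ediv B x = 0) ∧
    (∀ x, cross3 (B x) (ecurl B x) = egrad q x) ∧
    (∀ de di : ℝ, 0 < de → 0 ≤ di →
      (∀ x, B x = B x + de^2 • ecurl (ecurl B) x) ∧
      (∀ x, advect ((0 : E3)) (fun _ => (0 : E3)) x + egrad (fun y => -(q y)) x
          + cross3 (B x) (ecurl B x) = 0) ∧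
      (∀ x, ecurl (fun y => cross3 (B y) ((0 : E3) - di • ecurl B y)) x
          + de^2 • ecurl (fun y => cross3 (ecurl (fun _ => (0 : E3)) y) (ecurl B y)) x
          = 0)) := by
  have hB' : B = fun x => mk3 (x 1) (α * x 0) 0 := funext hB
  have hq' : q = fun x => ((α - 1) / 2) * (α * (x 0)^2 - (x 1)^2) := funext hq
  subst hB' hq'
  have hcurl : ∀ x : E3, ecurl (fun x : E3 => mk3 (x 1) (α * x 0) 0) x = mk3 0 0 (α - 1) := by
    intro x
    simp [ecurl]
  refine ⟨fun x => ⟨hcurl x, by simp [ediv]⟩, ?_, ?_⟩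
  · intro x
    rw [hcurl x]
    ext i
    fin_cases i <;> simp [cross3, egrad, pd_quad] <;> ring
  · intro de di hde hdi
    have hc : ecurl (fun x : E3 => mk3 (x 1) (α * x 0) 0) = fun _ => mk3 0 0 (α - 1) :=
      funext hcurl
    refine ⟨?_, ?_, ?_⟩
    · intro x
      rw [hc]
      have : ecurl (fun _ : E3 => mk3 0 0 (α - 1)) x = 0 := by
        ext i
        fin_cases i <;> simp [ecurl]
      rw [this]
      simp
    · intro x
      rw [hcurl x]
      ext i
      fin_cases i <;>
        simp [advect, egrad, cross3, ← neg_mul, pd_quad] <;> ring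
    · intro x
      rw [hc]
      have key : (fun y : E3 => cross3 ((fun x : E3 => mk3 (x 1) (α * x 0) 0) y)
          ((0 : E3) - di • (fun _ : E3 => mk3 0 0 (α - 1)) y))
          = fun y : E3 => mk3 ((-(di * (α - 1)) * α) * y 0) ((di * (α - 1)) * y 1) 0 := by
        funext y; ext i
        fin_cases i <;> simp [cross3] <;> ring
      rw [key]
      have h1 : ecurl (fun y : E3 =>
          mk3 ((-(di * (α - 1)) * α) * y 0) ((di * (α - 1)) * y 1) 0) x = 0 := by
        ext i; fin_cases i <;> simp [ecurl]
      have key2 : (fun y : E3 => cross3 (ecurl (fun _ : E3 => (0 : E3)) y)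
          ((fun _ : E3 => mk3 0 0 (α - 1)) y)) = fun _ : E3 => (0 : E3) := by
        funext y; ext i
        fin_cases i <;> simp [cross3, ecurl]
      rw [h1, key2]
      have h2 : ecurl (fun _ : E3 => (0 : E3)) x = 0 := by
        ext i; fin_cases i <;> simp [ecurl]
      rw [h2]
      simp
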